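/- arXiv:q-alg/9710001 — 3 statements merged into one kernel-verified Lean document; each statement's English description precedes it below -/
import Mathlib

section
/- For every i ≥ 1, the Carlitz polynomial e_i(t) = ∏_{m ∈ F_q[x], deg m < i} (t - m) satisfies e_i(t) = Σ_{j=0}^{i} (-1)^{i-j} (D_i / (D_j · L_{i-j}^{q^j})) · t^{q^j}, where D_i = [i][i-1]^q⋯[1]^{q^{i-1}}, L_i = [i][i-1]⋯[1], D_0 = L_0 = 1, and [i] = x^{q^i} - x in F_q[x]. -/
/- STATEMENT 0: For every i ≥ 1, the Carlitz polynomial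
   e_i(t) = ∏_{m ∈ F_q[x], deg m < i} (t - m) satisfies
   e_i(t) = Σ_{j=0}^{i} (-1)^{i-j} (D_i / (D_j · L_{i-j}^{q^j})) · t^{q^j}. -/

noncomputable section

/-- The bracket `[i] = x^{q^i} - x` in `F_q(x)`. -/
def carBr (Fq : Type*) [CommRing Fq] [IsDomain Fq] (q i : ℕ) : RatFunc Fq :=
  RatFunc.X ^ q ^ i - RatFunc.X

/-- `D_0 = 1`, `D_i = [i] D_{i-1}^q`. -/
def carD (Fq : Type*) [CommRing Fq] [IsDomain Fq] (q : ℕ) : ℕ → RatFunc Fq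
  | 0 => 1
  | i + 1 => carBr Fq q (i + 1) * (carD Fq q i) ^ q

/-- `L_0 = 1`, `L_i = [i] L_{i-1}`. -/
def carL (Fq : Type*) [CommRing Fq] [IsDomain Fq] (q : ℕ) : ℕ → RatFunc Fq
  | 0 => 1
  | i + 1 => carBr Fq q (i + 1) * carL Fq q i

/-- The Carlitz polynomial `e_i(t) = ∏_{m ∈ F_q[x], deg m < i} (t - m)`, the product
running over all polynomials of degree `< i`, enumerated by their coefficient tuples. -/
def carE (Fq : Type*) [Field Fq] [Fintype Fq] (i : ℕ) : Polynomial (RatFunc Fq) :=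
  ∏ c : Fin i → Fq,
    (Polynomial.X -
      Polynomial.C (∑ k : Fin i, algebraMap Fq (RatFunc Fq) (c k) * RatFunc.X ^ (k : ℕ)))

namespace CarAux

open Polynomial Finset

/-- product of `X - a` over a finite field -/
theorem prodFq (Fq : Type*) [Field Fq] [Fintype Fq] :
    ∏ a : Fq, (X - C a) = X ^ Fintype.card Fq - X := by
  classical
  have h2 : 1 < Fintype.card Fq := Fintype.one_lt_card
  have hm : (X ^ Fintype.card Fq - X : Fq[X]).Monic := by
    apply monic_X_pow_sub
    simpa using h2
  have hr := FiniteField.roots_X_pow_card_sub_X Fq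
  have hd := FiniteField.X_pow_card_sub_X_natDegree_eq Fq h2
  have := prod_multiset_X_sub_C_of_monic_of_roots_card_eq hm
    (by rw [hr, hd]; simp [Finset.card_univ])
  rw [hr] at this
  rw [← this, Finset.prod_eq_multiset_prod]

theorem two_le_q {p γ q : ℕ} (hp : p.Prime) (hγ : 0 < γ) (hq : q = p ^ γ) : 2 ≤ q := by
  subst hq
  exact le_trans hp.two_le (Nat.le_self_pow hγ.ne' p)

variable {Fq : Type*} [Field Fq] [Fintype Fq] {p γ q : ℕ}

section basic

variable (hp : p.Prime) (hγ : 0 < γ) (hq : q = p ^ γ) (hcard : Fintype.card Fq = q)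
include hp hγ hq

include hcard in
theorem charP_Fq : CharP Fq p := by
  have h0 : (q : Fq) = 0 := by rw [← hcard]; exact FiniteField.cast_card_eq_zero Fq
  have hdvd : ringChar Fq ∣ q := (CharP.cast_eq_zero_iff Fq (ringChar Fq) q).mp h0
  have hprime : (ringChar Fq).Prime := CharP.char_is_prime Fq (ringChar Fq)
  have : ringChar Fq = p := by
    rw [hq] at hdvd
    exact (Nat.prime_dvd_prime_iff_eq hprime hp).mp (hprime.dvd_of_dvd_pow hdvd)
  exact this ▸ ringChar.charP Fq

include hcard in
theorem charP_K : CharP (RatFunc Fq) p := by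
  haveI := charP_Fq hp hγ hq hcard
  exact charP_of_injective_algebraMap (algebraMap Fq (RatFunc Fq)).injective p

theorem qpow (n : ℕ) : q ^ n = p ^ (γ * n) := by rw [hq, ← pow_mul]

include hcard in
theorem frob_sub (a b : RatFunc Fq) (n : ℕ) :
    (a - b) ^ q ^ n = a ^ q ^ n - b ^ q ^ n := by
  haveI := Fact.mk hp
  haveI := charP_K hp hγ hq hcard
  rw [qpow hp hγ hq]
  exact sub_pow_char_pow a b (γ * n)

include hcard in
theorem frob_neg_one (n : ℕ) : ((-1 : RatFunc Fq)) ^ q ^ n = -1 := by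
  haveI := Fact.mk hp
  haveI := charP_K hp hγ hq hcard
  rw [qpow hp hγ hq]
  exact neg_one_pow_char_pow (RatFunc Fq) p (γ * n)

include hcard in
theorem frob_neg_one_q : ((-1 : RatFunc Fq)) ^ q = -1 := by
  have := frob_neg_one hp hγ hq hcard 1
  rwa [pow_one] at this

include hcard in
theorem frob_sum {ι : Type*} (s : Finset ι) (f : ι → RatFunc Fq) (n : ℕ) :
    (∑ j ∈ s, f j) ^ q ^ n = ∑ j ∈ s, (f j) ^ q ^ n := by
  haveI := Fact.mk hp
  haveI := charP_K hp hγ hq hcard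
  rw [qpow hp hγ hq]
  apply sum_pow_char_pow

include hcard in
theorem frob_sum_q {ι : Type*} (s : Finset ι) (f : ι → RatFunc Fq) :
    (∑ j ∈ s, f j) ^ q = ∑ j ∈ s, (f j) ^ q := by
  have := frob_sum hp hγ hq hcard s f 1
  simpa using this

end basic

section nonzero

variable (hp : p.Prime) (hγ : 0 < γ) (hq : q = p ^ γ)
include hp hγ hq

theorem br_ne (j : ℕ) (hj : 1 ≤ j) : carBr Fq q j ≠ 0 := by
  have h2 : 1 < q ^ j :=
    lt_of_lt_of_le (two_le_q hp hγ hq) (Nat.le_self_pow (by omega) q)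
  have hpoly : (Polynomial.X ^ q ^ j - Polynomial.X : Polynomial Fq) ≠ 0 :=
    FiniteField.X_pow_card_sub_X_ne_zero Fq h2
  have : carBr Fq q j = algebraMap (Polynomial Fq) (RatFunc Fq)
      (Polynomial.X ^ q ^ j - Polynomial.X) := by
    rw [map_sub, map_pow, RatFunc.algebraMap_X, carBr]
  rw [this]
  exact RatFunc.algebraMap_ne_zero hpoly

theorem carD_ne (i : ℕ) : carD Fq q i ≠ 0 := by
  induction i with
  | zero => simp [carD]
  | succ n ih =>
      rw [carD]
      exact mul_ne_zero (br_ne (Fq := Fq) hp hγ hq (n + 1) (by omega)) (pow_ne_zero _ ih)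

theorem carL_ne (i : ℕ) : carL Fq q i ≠ 0 := by
  induction i with
  | zero => simp [carL]
  | succ n ih =>
      rw [carL]
      exact mul_ne_zero (br_ne (Fq := Fq) hp hγ hq (n + 1) (by omega)) ih

end nonzero

theorem br_zero : carBr Fq q 0 = 0 := by simp [carBr]

theorem br_add_X (j : ℕ) : carBr Fq q j + RatFunc.X = RatFunc.X ^ q ^ j := by
  simp [carBr]

variable (hp : p.Prime) (hγ : 0 < γ) (hq : q = p ^ γ) (hcard : Fintype.card Fq = q)

include hp hγ hq hcard in
theorem br_key (i j : ℕ) (hj : j ≤ i + 1) :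
    carBr Fq q (i + 1) = carBr Fq q j + (carBr Fq q (i + 1 - j)) ^ q ^ j := by
  rw [carBr, carBr, carBr, frob_sub hp hγ hq hcard, ← pow_mul, ← pow_add]
  rw [Nat.sub_add_cancel hj]
  ring

/-- The auxiliary sum `S n i = ∑_j (-1)^{i-j} X^{n q^j} / (D_j L_{i-j}^{q^j})`. -/
def SS (Fq : Type*) [Field Fq] [Fintype Fq] (q n i : ℕ) : RatFunc Fq :=
  ∑ j ∈ Finset.range (i + 1),
    (-1 : RatFunc Fq) ^ (i - j) *
      (RatFunc.X ^ (n * q ^ j) / (carD Fq q j * (carL Fq q (i - j)) ^ q ^ j))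

include hp hγ hq hcard in
theorem frobSS (n i : ℕ) :
    (SS Fq q n i) ^ q = ∑ j ∈ Finset.range (i + 1),
      (-1 : RatFunc Fq) ^ (i - j) *
        (RatFunc.X ^ (n * q ^ (j + 1)) /
          ((carD Fq q j) ^ q * (carL Fq q (i - j)) ^ q ^ (j + 1))) := by
  rw [SS, frob_sum_q hp hγ hq hcard]
  apply Finset.sum_congr rfl
  intro j hj
  have h1 : ((-1 : RatFunc Fq) ^ (i - j)) ^ q = (-1 : RatFunc Fq) ^ (i - j) := by
    rw [← pow_mul, mul_comm, pow_mul, frob_neg_one_q hp hγ hq hcard]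
  have h2 : ((RatFunc.X : RatFunc Fq) ^ (n * q ^ j)) ^ q = RatFunc.X ^ (n * q ^ (j + 1)) := by
    rw [← pow_mul, mul_assoc, ← pow_succ]
  have h3 : ((carL Fq q (i - j)) ^ q ^ j) ^ q = (carL Fq q (i - j)) ^ q ^ (j + 1) := by
    rw [← pow_mul, ← pow_succ]
  rw [mul_pow, div_pow, mul_pow, h1, h2, h3]

include hp hγ hq hcard in
/-- The shared "A-sum" computation. -/
theorem A_sum (i : ℕ) (hH : SS Fq q (i + 1) i = ∑ k ∈ Finset.range (i + 1), RatFunc.X ^ q ^ k) :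
    ∑ j ∈ Finset.range (i + 2),
      (-1 : RatFunc Fq) ^ (i + 1 - j) *
        (carBr Fq q j * RatFunc.X ^ ((i + 1) * q ^ j) /
          (carD Fq q j * (carL Fq q (i + 1 - j)) ^ q ^ j))
      = ∑ k ∈ Finset.range (i + 1), RatFunc.X ^ q ^ (k + 1) := by
  rw [Finset.sum_range_succ']
  have h0 : (-1 : RatFunc Fq) ^ (i + 1 - 0) *
      (carBr Fq q 0 * RatFunc.X ^ ((i + 1) * q ^ 0) /
        (carD Fq q 0 * (carL Fq q (i + 1 - 0)) ^ q ^ 0)) = 0 := by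
    rw [br_zero]; ring
  rw [h0, add_zero]
  have key : ∀ j ∈ Finset.range (i + 1),
      (-1 : RatFunc Fq) ^ (i + 1 - (j + 1)) *
        (carBr Fq q (j + 1) * RatFunc.X ^ ((i + 1) * q ^ (j + 1)) /
          (carD Fq q (j + 1) * (carL Fq q (i + 1 - (j + 1))) ^ q ^ (j + 1)))
      = (-1 : RatFunc Fq) ^ (i - j) *
        (RatFunc.X ^ ((i + 1) * q ^ (j + 1)) /
          ((carD Fq q j) ^ q * (carL Fq q (i - j)) ^ q ^ (j + 1))) := by
    intro j hj
    have hsub : i + 1 - (j + 1) = i - j := by omega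
    rw [hsub, carD]
    have hbr := br_ne (Fq := Fq) hp hγ hq (j + 1) (by omega)
    have hd := carD_ne (Fq := Fq) hp hγ hq j
    have hl := carL_ne (Fq := Fq) hp hγ hq (i - j)
    field_simp
  rw [Finset.sum_congr rfl key, ← frobSS hp hγ hq hcard, hH,
    frob_sum_q hp hγ hq hcard]
  apply Finset.sum_congr rfl
  intro k _
  rw [← pow_mul, ← pow_succ]

include hp hγ hq hcard in
theorem GH (i : ℕ) :
    SS Fq q i i = 1 ∧
      SS Fq q (i + 1) i = ∑ k ∈ Finset.range (i + 1), RatFunc.X ^ q ^ k := by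
  induction i with
  | zero =>
      constructor
      · simp [SS, carD, carL]
      · simp [SS, carD, carL]
  | succ i ih =>
      obtain ⟨hG, hH⟩ := ih
      have hbr := br_ne (Fq := Fq) hp hγ hq (i + 1) (by omega)
      -- decompose each term of `SS (i+1) (i+1)` multiplied by `[i+1]`
      have hmul : carBr Fq q (i + 1) * SS Fq q (i + 1) (i + 1)
          = (∑ j ∈ Finset.range (i + 2),
              (-1 : RatFunc Fq) ^ (i + 1 - j) *
                (carBr Fq q j * RatFunc.X ^ ((i + 1) * q ^ j) /
                  (carD Fq q j * (carL Fq q (i + 1 - j)) ^ q ^ j)))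
            + (∑ j ∈ Finset.range (i + 2),
              (-1 : RatFunc Fq) ^ (i + 1 - j) *
                ((carBr Fq q (i + 1 - j)) ^ q ^ j * RatFunc.X ^ ((i + 1) * q ^ j) /
                  (carD Fq q j * (carL Fq q (i + 1 - j)) ^ q ^ j))) := by
        rw [SS, Finset.mul_sum, ← Finset.sum_add_distrib]
        apply Finset.sum_congr rfl
        intro j hj
        have hkey := br_key hp hγ hq hcard i j (by
          simp only [Finset.mem_range] at hj; omega)
        rw [hkey]
        ring
      -- second sum equals `- SS (i+1) i`
      have hB : (∑ j ∈ Finset.range (i + 2),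
            (-1 : RatFunc Fq) ^ (i + 1 - j) *
              ((carBr Fq q (i + 1 - j)) ^ q ^ j * RatFunc.X ^ ((i + 1) * q ^ j) /
                (carD Fq q j * (carL Fq q (i + 1 - j)) ^ q ^ j)))
          = - SS Fq q (i + 1) i := by
        rw [Finset.sum_range_succ]
        have htop : (-1 : RatFunc Fq) ^ (i + 1 - (i + 1)) *
            ((carBr Fq q (i + 1 - (i + 1))) ^ q ^ (i + 1) *
              RatFunc.X ^ ((i + 1) * q ^ (i + 1)) /
              (carD Fq q (i + 1) * (carL Fq q (i + 1 - (i + 1))) ^ q ^ (i + 1))) = 0 := by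
          simp [br_zero, zero_pow (pow_ne_zero (i + 1)
            (by have := two_le_q hp hγ hq; omega : q ≠ 0))]
        rw [htop, add_zero, SS, ← Finset.sum_neg_distrib]
        apply Finset.sum_congr rfl
        intro j hj
        simp only [Finset.mem_range] at hj
        have hj' : j ≤ i := by omega
        have hsub : i + 1 - j = (i - j) + 1 := by omega
        rw [hsub, carL]
        have hbr2 := br_ne (Fq := Fq) hp hγ hq (i - j + 1) (by omega)
        have hd := carD_ne (Fq := Fq) hp hγ hq j
        have hl := carL_ne (Fq := Fq) hp hγ hq (i - j)
        have hsign : (-1 : RatFunc Fq) ^ (i - j + 1) = -(-1 : RatFunc Fq) ^ (i - j) := by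
          rw [pow_succ]; ring
        rw [hsign, mul_pow]
        field_simp
      have hAB := A_sum hp hγ hq hcard i hH
      rw [hAB, hB, hH] at hmul
      -- telescope
      have htel : (∑ k ∈ Finset.range (i + 1), RatFunc.X ^ q ^ (k + 1))
          + -(∑ k ∈ Finset.range (i + 1), (RatFunc.X : RatFunc Fq) ^ q ^ k)
          = carBr Fq q (i + 1) := by
        rw [Finset.sum_range_succ, Finset.sum_range_succ']
        simp only [pow_zero, pow_one]
        rw [carBr]
        ring
      rw [htel] at hmul
      have hG' : SS Fq q (i + 1) (i + 1) = 1 := by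
        have := mul_left_cancel₀ hbr (hmul.trans (mul_one _).symm)
        exact this
      refine ⟨hG', ?_⟩
      -- now the H part
      have hsplit : SS Fq q (i + 2) (i + 1)
          = (∑ j ∈ Finset.range (i + 2),
              (-1 : RatFunc Fq) ^ (i + 1 - j) *
                (carBr Fq q j * RatFunc.X ^ ((i + 1) * q ^ j) /
                  (carD Fq q j * (carL Fq q (i + 1 - j)) ^ q ^ j)))
            + RatFunc.X * SS Fq q (i + 1) (i + 1) := by
        rw [SS, SS, Finset.mul_sum, ← Finset.sum_add_distrib]
        apply Finset.sum_congr rfl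
        intro j hj
        have hX : (RatFunc.X : RatFunc Fq) ^ ((i + 2) * q ^ j)
            = (carBr Fq q j + RatFunc.X) * RatFunc.X ^ ((i + 1) * q ^ j) := by
          rw [br_add_X, ← pow_add]
          congr 1
          ring
        rw [hX]
        ring
      rw [hsplit, hAB, hG', mul_one, Finset.sum_range_succ' (fun k => (RatFunc.X : RatFunc Fq) ^ q ^ k) (i + 1)]
      simp

/-- The coefficient in the Carlitz expansion. -/
def cfun (Fq : Type*) [Field Fq] [Fintype Fq] (q i j : ℕ) : RatFunc Fq :=
  (-1 : RatFunc Fq) ^ (i - j) *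
    (carD Fq q i / (carD Fq q j * (carL Fq q (i - j)) ^ q ^ j))

include hp hγ hq hcard in
theorem E_eq (i : ℕ) :
    ∑ j ∈ Finset.range (i + 1), cfun Fq q i j * RatFunc.X ^ (i * q ^ j)
      = carD Fq q i := by
  have hG := (GH hp hγ hq hcard i).1
  have : ∑ j ∈ Finset.range (i + 1), cfun Fq q i j * RatFunc.X ^ (i * q ^ j)
      = carD Fq q i * SS Fq q i i := by
    rw [SS, Finset.mul_sum]
    apply Finset.sum_congr rfl
    intro j hj
    rw [cfun]
    ring
  rw [this, hG, mul_one]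

include hp hγ hq hcard in
/-- Product over the field of shifted polynomials. -/
theorem prod_shift (P : Polynomial (RatFunc Fq)) (e : RatFunc Fq) (he : e ≠ 0) :
    ∏ a : Fq, (P - C (algebraMap Fq (RatFunc Fq) a * e))
      = P ^ q - C (e ^ (q - 1)) * P := by
  classical
  have hq1 : 1 ≤ q := le_trans (by norm_num) (two_le_q hp hγ hq)
  set f : Fq →+* Polynomial (RatFunc Fq) :=
    (C : RatFunc Fq →+* Polynomial (RatFunc Fq)).comp (algebraMap Fq (RatFunc Fq)) with hf
  set w : Polynomial (RatFunc Fq) := C e⁻¹ * P with hw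
  have base := prodFq Fq
  have happ := congrArg (Polynomial.eval₂ f w) base
  rw [Polynomial.eval₂_finset_prod] at happ
  simp only [Polynomial.eval₂_sub, Polynomial.eval₂_X, Polynomial.eval₂_C,
    Polynomial.eval₂_pow, hcard] at happ
  -- happ : ∏ a, (w - f a) = w ^ q - w
  have hstep : ∀ a : Fq, P - C (algebraMap Fq (RatFunc Fq) a * e)
      = C e * (w - f a) := by
    intro a
    rw [hw, hf]
    simp only [RingHom.comp_apply, mul_sub, ← mul_assoc, ← C_mul,
      mul_inv_cancel₀ he, C_1, one_mul]
    rw [mul_comm (algebraMap Fq (RatFunc Fq) a) e]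
  calc ∏ a : Fq, (P - C (algebraMap Fq (RatFunc Fq) a * e))
      = ∏ a : Fq, (C e * (w - f a)) := Finset.prod_congr rfl fun a _ => hstep a
    _ = (C e) ^ Fintype.card Fq * ∏ a : Fq, (w - f a) := by
        rw [Finset.prod_mul_distrib, Finset.prod_const, Finset.card_univ]
    _ = (C e) ^ q * (w ^ q - w) := by rw [hcard, happ]
    _ = P ^ q - C (e ^ (q - 1)) * P := by
        rw [hw, mul_pow, mul_sub, ← mul_assoc, ← mul_assoc, ← C_pow, ← C_pow,
          ← C_mul, ← C_mul, inv_pow, mul_inv_cancel₀ (pow_ne_zero q he), C_1, one_mul]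
        congr 2
        rw [pow_sub₀ e he hq1, pow_one]

include hp hγ hq hcard in
theorem frobP_sub (u v : Polynomial (RatFunc Fq)) (n : ℕ) :
    (u - v) ^ q ^ n = u ^ q ^ n - v ^ q ^ n := by
  haveI := Fact.mk hp
  haveI : CharP (RatFunc Fq) p := charP_K hp hγ hq hcard
  rw [qpow hp hγ hq]
  exact sub_pow_char_pow u v (γ * n)

include hp hγ hq hcard in
theorem frobP_sum {ι : Type*} (s : Finset ι) (f : ι → Polynomial (RatFunc Fq)) :
    (∑ j ∈ s, f j) ^ q = ∑ j ∈ s, (f j) ^ q := by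
  haveI := Fact.mk hp
  haveI : CharP (RatFunc Fq) p := charP_K hp hγ hq hcard
  rw [show q = p ^ (γ * 1) by rw [mul_one, ← hq]]
  apply sum_pow_char_pow

include hp hγ hq hcard in
theorem pow_q_pow_fixed (a : Fq) (j : ℕ) :
    a ^ q ^ j = a := by
  rw [← hcard]
  exact FiniteField.pow_card_pow j a

theorem midkey {K : Type*} [Field K] (a B E N L : K) (R : ℕ)
    (hB : B ≠ 0) (hE : E ≠ 0) (hN : N ≠ 0) (hL : L ≠ 0) :
    (B + E ^ R) * a / (B * N * (E * L) ^ R)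
      = a / (N * (E * L) ^ R) + a / (B * N * L ^ R) := by
  rw [mul_pow]
  have hER := pow_ne_zero R hE
  have hLR := pow_ne_zero R hL
  field_simp

include hp hγ hq hcard in
set_option maxHeartbeats 2000000 in
theorem main (i : ℕ) :
    carE Fq i = ∑ j ∈ Finset.range (i + 1), C (cfun Fq q i j) * X ^ q ^ j := by
  haveI := Fact.mk hp
  induction i with
  | zero =>
      rw [carE]
      rw [Finset.range_one, Finset.sum_singleton]
      simp [cfun, carD, carL]
  | succ i IH =>
      have hq1 : 1 ≤ q := by have := two_le_q hp hγ hq; omega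
      have hd := carD_ne (Fq := Fq) hp hγ hq i
      -- step 1: reindex the product over tuples
      have h1 : carE Fq (i + 1) = ∏ a : Fq, ∏ c : Fin i → Fq,
          (X - C ((∑ k : Fin i, algebraMap Fq (RatFunc Fq) (c k) * RatFunc.X ^ (k : ℕ))
            + algebraMap Fq (RatFunc Fq) a * RatFunc.X ^ i)) := by
        rw [carE, ← Equiv.prod_comp (Fin.snocEquiv (fun _ : Fin (i + 1) => Fq))
          (fun c : Fin (i + 1) → Fq => X - C (∑ k : Fin (i + 1),
            algebraMap Fq (RatFunc Fq) (c k) * RatFunc.X ^ (k : ℕ))),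
          Fintype.prod_prod_type]
        apply Finset.prod_congr rfl
        intro a _
        apply Finset.prod_congr rfl
        intro c _
        congr 1
        rw [Fin.sum_univ_castSucc]
        simp [Fin.snocEquiv, Fin.snoc_castSucc]
      -- step 2: inner product
      have h2 : ∀ a : Fq, (∏ c : Fin i → Fq,
          (X - C ((∑ k : Fin i, algebraMap Fq (RatFunc Fq) (c k) * RatFunc.X ^ (k : ℕ))
            + algebraMap Fq (RatFunc Fq) a * RatFunc.X ^ i)))
          = (∑ j ∈ Finset.range (i + 1), C (cfun Fq q i j) * X ^ q ^ j)
            - C (algebraMap Fq (RatFunc Fq) a * carD Fq q i) := by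
        intro a
        set s : RatFunc Fq := algebraMap Fq (RatFunc Fq) a * RatFunc.X ^ i with hs
        have step1 : (∏ c : Fin i → Fq,
            (X - C ((∑ k : Fin i, algebraMap Fq (RatFunc Fq) (c k) * RatFunc.X ^ (k : ℕ)) + s)))
            = (carE Fq i).comp (X - C s) := by
          rw [carE, Polynomial.prod_comp]
          apply Finset.prod_congr rfl
          intro c _
          rw [Polynomial.sub_comp, Polynomial.X_comp, Polynomial.C_comp, map_add]
          ring
        rw [step1, IH]
        have step2 : (∑ j ∈ Finset.range (i + 1), C (cfun Fq q i j) * X ^ q ^ j).comp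
            (X - C s) = ∑ j ∈ Finset.range (i + 1),
              C (cfun Fq q i j) * (X - C s) ^ q ^ j := by
          rw [Polynomial.comp, Polynomial.eval₂_finset_sum]
          apply Finset.sum_congr rfl
          intro j _
          rw [← Polynomial.comp, Polynomial.mul_comp, Polynomial.C_comp, Polynomial.pow_comp,
            Polynomial.X_comp]
        rw [step2]
        have step3 : ∀ j ∈ Finset.range (i + 1),
            C (cfun Fq q i j) * ((X : Polynomial (RatFunc Fq)) - C s) ^ q ^ j
            = C (cfun Fq q i j) * X ^ q ^ j
              - C (algebraMap Fq (RatFunc Fq) a * (cfun Fq q i j * RatFunc.X ^ (i * q ^ j))) := by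
          intro j _
          rw [frobP_sub hp hγ hq hcard, ← Polynomial.C_pow, hs, mul_pow, ← pow_mul,
            ← map_pow, pow_q_pow_fixed hp hγ hq hcard]
          rw [mul_sub, ← Polynomial.C_mul]
          ring_nf
        rw [Finset.sum_congr rfl step3, Finset.sum_sub_distrib,
          ← map_sum (Polynomial.C : RatFunc Fq →+* Polynomial (RatFunc Fq))
            (fun j => algebraMap Fq (RatFunc Fq) a * (cfun Fq q i j * RatFunc.X ^ (i * q ^ j)))
            (Finset.range (i + 1)),
          ← Finset.mul_sum, E_eq hp hγ hq hcard]
      rw [h1, Finset.prod_congr rfl (fun a _ => h2 a),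
        prod_shift hp hγ hq hcard _ (carD Fq q i) hd]
      -- step 3 : expand the Frobenius and recombine
      set cf : ℕ → RatFunc Fq := fun j => cfun Fq q i j with hcf
      set b : ℕ → RatFunc Fq := fun j =>
        (if j = 0 then 0 else (cf (j - 1)) ^ q)
          - carD Fq q i ^ (q - 1) * (if j ≤ i then cf j else 0) with hb
      have hPq : (∑ j ∈ Finset.range (i + 1), C (cf j) * X ^ q ^ j) ^ q
          = ∑ j ∈ Finset.range (i + 1), C ((cf j) ^ q) * X ^ q ^ (j + 1) := by
        rw [frobP_sum hp hγ hq hcard]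
        apply Finset.sum_congr rfl
        intro j _
        rw [mul_pow, ← Polynomial.C_pow, ← pow_mul, ← pow_succ]
      have hCP : C (carD Fq q i ^ (q - 1)) * (∑ j ∈ Finset.range (i + 1), C (cf j) * X ^ q ^ j)
          = ∑ j ∈ Finset.range (i + 1), C (carD Fq q i ^ (q - 1) * cf j) * X ^ q ^ j := by
        rw [Finset.mul_sum]
        apply Finset.sum_congr rfl
        intro j _
        rw [← mul_assoc, ← Polynomial.C_mul]
      rw [hPq, hCP]
      have hsplit : ∑ j ∈ Finset.range (i + 2), C (b j) * X ^ q ^ j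
          = ∑ j ∈ Finset.range (i + 1), C ((cf j) ^ q) * X ^ q ^ (j + 1)
            - ∑ j ∈ Finset.range (i + 1), C (carD Fq q i ^ (q - 1) * cf j) * X ^ q ^ j := by
        have hbj : ∀ j, C (b j) * (X : Polynomial (RatFunc Fq)) ^ q ^ j
            = C (if j = 0 then 0 else (cf (j - 1)) ^ q) * X ^ q ^ j
              - C (carD Fq q i ^ (q - 1) * (if j ≤ i then cf j else 0)) * X ^ q ^ j := by
          intro j
          rw [hb]
          simp only [map_sub, Polynomial.C_mul]
          ring
        rw [Finset.sum_congr rfl (fun j _ => hbj j), Finset.sum_sub_distrib]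
        congr 1
        · rw [Finset.sum_range_succ']
          simp only [Nat.add_sub_cancel, if_neg (Nat.succ_ne_zero _), if_pos rfl]
          simp
        · rw [Finset.sum_range_succ, if_neg (by omega : ¬ i + 1 ≤ i)]
          simp only [mul_zero, map_zero, zero_mul, add_zero]
          apply Finset.sum_congr rfl
          intro j hj
          rw [if_pos (by simp only [Finset.mem_range] at hj; omega : j ≤ i)]
      rw [← hsplit]
      -- step 4 : identify coefficients
      apply Finset.sum_congr rfl
      intro j hj
      simp only [Finset.mem_range] at hj
      congr 1
      have hdq : carD Fq q i ^ (q - 1) * carD Fq q i = carD Fq q i ^ q := by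
        rw [← pow_succ, Nat.sub_add_cancel hq1]
      -- cases on j
      rcases Nat.eq_zero_or_pos j with hj0 | hjpos
      · subst hj0
        rw [hb, hcf]
        simp only [if_pos rfl, ite_true, if_pos (Nat.zero_le i), zero_sub]
        rw [cfun, cfun]
        simp only [Nat.sub_zero]
        rw [show carD Fq q (i + 1) = carBr Fq q (i + 1) * carD Fq q i ^ q from rfl,
          show carL Fq q (i + 1) = carBr Fq q (i + 1) * carL Fq q i from rfl]
        have hbr := br_ne (Fq := Fq) hp hγ hq (i + 1) (by omega)
        have hL := carL_ne (Fq := Fq) hp hγ hq i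
        rw [pow_zero, pow_one, pow_succ, carD, ← hdq]
        field_simp
      · rcases Nat.lt_or_ge j (i + 1) with hjmid | hjtop
        · -- 1 ≤ j ≤ i
          obtain ⟨k, rfl⟩ : ∃ k, j = k + 1 := ⟨j - 1, by omega⟩
          have hki : k + 1 ≤ i := by omega
          rw [hb, hcf]
          simp only [if_neg (Nat.succ_ne_zero k), if_pos hki, Nat.add_sub_cancel]
          rw [cfun, cfun, cfun]
          obtain ⟨m, hm1, hm2, hm3⟩ : ∃ m, i + 1 - (k + 1) = m + 1 ∧ i - (k + 1) = m ∧
              i - k = m + 1 := ⟨i - k - 1, by omega, by omega, by omega⟩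
          rw [hm1, hm2, hm3]
          have hbrkey := br_key hp hγ hq hcard i (k + 1) (by omega)
          rw [hm1] at hbrkey
          have hfrobneg : ((-1 : RatFunc Fq) ^ (m + 1)) ^ q = (-1 : RatFunc Fq) ^ (m + 1) := by
            rw [← pow_mul, mul_comm, pow_mul, frob_neg_one_q hp hγ hq hcard]
          have hLq : ((carL Fq q (m + 1)) ^ q ^ k) ^ q = (carL Fq q (m + 1)) ^ q ^ (k + 1) := by
            rw [← pow_mul, ← pow_succ]
          rw [mul_pow, hfrobneg, div_pow, mul_pow, hLq]
          rw [show carD Fq q (i + 1) = carBr Fq q (i + 1) * carD Fq q i ^ q from rfl,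
            show carD Fq q (k + 1) = carBr Fq q (k + 1) * carD Fq q k ^ q from rfl,
            hbrkey,
            show carL Fq q (m + 1) = carBr Fq q (m + 1) * carL Fq q m from rfl]
          have hbrk1 := br_ne (Fq := Fq) hp hγ hq (k + 1) (by omega)
          have hbrm1 := br_ne (Fq := Fq) hp hγ hq (m + 1) (by omega)
          have hdk := carD_ne (Fq := Fq) hp hγ hq k
          have hLm := carL_ne (Fq := Fq) hp hγ hq m
          have hrw : carD Fq q i ^ (q - 1) * ((-1 : RatFunc Fq) ^ m *
              (carD Fq q i / (carBr Fq q (k + 1) * carD Fq q k ^ q *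
                carL Fq q m ^ q ^ (k + 1))))
              = -((-1 : RatFunc Fq) ^ (m + 1) * (carD Fq q i ^ q /
                (carBr Fq q (k + 1) * carD Fq q k ^ q * carL Fq q m ^ q ^ (k + 1)))) := by
            rw [← hdq]
            ring
          rw [hrw, sub_neg_eq_add,
            midkey (carD Fq q i ^ q) (carBr Fq q (k + 1)) (carBr Fq q (m + 1))
              (carD Fq q k ^ q) (carL Fq q m) (q ^ (k + 1)) hbrk1 hbrm1
              (pow_ne_zero q hdk) hLm]
          ring
        · -- j = i + 1
          have : j = i + 1 := by omega
          subst this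
          rw [hb, hcf]
          simp only [if_neg (Nat.succ_ne_zero i), if_neg (by omega : ¬ i + 1 ≤ i),
            Nat.add_sub_cancel, mul_zero, sub_zero]
          rw [cfun, cfun]
          simp only [Nat.sub_self, pow_zero, one_mul, carL]
          rw [one_pow, one_pow, mul_one, mul_one, div_self hd,
            div_self (carD_ne (Fq := Fq) hp hγ hq (i + 1)), one_pow]

end CarAux

theorem carlitz_e_expansion
    (p γ : ℕ) (hp : p.Prime) (hγ : 0 < γ) (q : ℕ) (hq : q = p ^ γ)
    (Fq : Type*) [Field Fq] [Fintype Fq] (hcard : Fintype.card Fq = q)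
    (i : ℕ) (hi : 1 ≤ i) :
    carE Fq i =
      ∑ j ∈ Finset.range (i + 1),
        Polynomial.C ((-1 : RatFunc Fq) ^ (i - j) *
            (carD Fq q i / (carD Fq q j * (carL Fq q (i - j)) ^ q ^ j))) *
          Polynomial.X ^ q ^ j := by
  have := CarAux.main hp hγ hq hcard i
  rw [this]
  rfl
end
end

section
/- Let n = α_0 + α_1 q + ⋯ + α_s q^s with 0 ≤ α_k < q. Enumerate F_q = {a_0, …, a_{q−1}} with a_0 = 0, and for each j = Σ β_k q^k set m_j = a_{β_0} + a_{β_1}x + ⋯ ∈ F_q[x]. Then the x-adic valuation of P_n(m_n) = ∏_{j=0}^{n−1}(m_n − m_j) equals l_n = Σ_{k=1}^{s} ((q^k − 1)/(q − 1)) α_k. -/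
/- STATEMENT 8: With F_q enumerated as {a_0, …, a_{q-1}}, a_0 = 0, and
   m_j = Σ_k a_{β_k} x^k for j with q-adic digits β_k, the x-adic valuation of
   P_n(m_n) = ∏_{j=0}^{n-1} (m_n - m_j) equals
   l_n = Σ_{k=1}^s ((q^k - 1)/(q - 1)) α_k, where α_k are the q-adic digits of n. -/

noncomputable section

/-- `m_j = Σ_k a_{β_k} x^k`, where `β_k` are the base-`q` digits of `j` and
`a : ℕ → Fq` is an enumeration of `F_q`. -/
def mPoly {Fq : Type*} [CommRing Fq] (a : ℕ → Fq) (q j : ℕ) : Polynomial Fq :=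
  ∑ k ∈ Finset.range (Nat.digits q j).length,
    Polynomial.C (a ((Nat.digits q j).getD k 0)) * Polynomial.X ^ k

section Aux

variable {q : ℕ}

lemma aux_pow_big (hq2 : 2 ≤ q) {r m : ℕ} (h : m ≤ r) : m < q ^ r :=
  lt_of_lt_of_le (Nat.lt_two_pow_self (n := m))
    (le_trans (Nat.pow_le_pow_right Nat.two_pos h) (Nat.pow_le_pow_left hq2 r))

lemma aux_getD_digits (hq2 : 2 ≤ q) : ∀ k j : ℕ, (Nat.digits q j).getD k 0 = j / q ^ k % q := by
  intro k
  induction k with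
  | zero =>
    intro j
    rcases Nat.eq_zero_or_pos j with rfl | hj
    · simp
    · rw [Nat.digits_def' hq2 hj]; simp
  | succ k ih =>
    intro j
    rcases Nat.eq_zero_or_pos j with rfl | hj
    · simp
    · rw [Nat.digits_def' hq2 hj]
      simp only [List.getD_cons_succ]
      rw [ih (j / q), Nat.div_div_eq_div_mul, ← pow_succ']

lemma aux_mod_pow_eq_iff (n j : ℕ) : ∀ r : ℕ,
    (n % q ^ r = j % q ^ r ↔ ∀ d < r, n / q ^ d % q = j / q ^ d % q) := by
  intro r
  induction r with
  | zero => simp [Nat.mod_one]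
  | succ r ih =>
    constructor
    · intro h d hd
      rcases Nat.lt_succ_iff_lt_or_eq.mp hd with hd | rfl
      · refine (ih.mp ?_) d hd
        have := congrArg (· % q ^ r) h
        simpa [Nat.mod_mod_of_dvd _ (pow_dvd_pow q r.le_succ)] using this
      · have h' : n % (q ^ d * q) = j % (q ^ d * q) := by rwa [← pow_succ]
        rw [← Nat.mod_mul_right_div_self n (q ^ d) q, ← Nat.mod_mul_right_div_self j (q ^ d) q, h']
    · intro h
      have hr : n % q ^ r = j % q ^ r := ih.mpr fun d hd => h d (hd.trans r.lt_succ_self)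
      have hsn : n % q ^ (r + 1) = q ^ r * (n / q ^ r % q) + n % q ^ r := by
        conv_lhs => rw [← Nat.div_add_mod (n % q ^ (r + 1)) (q ^ r)]
        rw [pow_succ, Nat.mod_mul_right_div_self, Nat.mod_mod_of_dvd _ (dvd_mul_right _ q)]
      have hsj : j % q ^ (r + 1) = q ^ r * (j / q ^ r % q) + j % q ^ r := by
        conv_lhs => rw [← Nat.div_add_mod (j % q ^ (r + 1)) (q ^ r)]
        rw [pow_succ, Nat.mod_mul_right_div_self, Nat.mod_mod_of_dvd _ (dvd_mul_right _ q)]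
      rw [hsn, hsj, hr, h r r.lt_succ_self]

variable {Fq : Type*} [Field Fq] (a : ℕ → Fq)

lemma aux_coeff_mPoly (hq2 : 2 ≤ q) (ha0 : a 0 = 0) (j k : ℕ) :
    (mPoly a q j).coeff k = a (j / q ^ k % q) := by
  rw [← aux_getD_digits hq2]
  unfold mPoly
  rw [Polynomial.finset_sum_coeff]
  simp only [Polynomial.coeff_C_mul, Polynomial.coeff_X_pow, mul_ite, mul_one, mul_zero]
  rw [Finset.sum_ite_eq]
  split
  · rfl
  · next h =>
    rw [List.getD_eq_default, ha0]
    simpa using h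

lemma aux_X_pow_dvd (hq2 : 2 ≤ q) (ha0 : a 0 = 0)
    (hainj : ∀ i < q, ∀ i' < q, a i = a i' → i = i') {n j : ℕ} (hj : j ≤ n) (r : ℕ) :
    (Polynomial.X ^ r ∣ (mPoly a q n - mPoly a q j)) ↔ q ^ r ∣ (n - j) := by
  rw [Polynomial.X_pow_dvd_iff]
  have h1 : ∀ d : ℕ, ((mPoly a q n - mPoly a q j).coeff d = 0 ↔ n / q ^ d % q = j / q ^ d % q) := by
    intro d
    rw [Polynomial.coeff_sub, aux_coeff_mPoly a hq2 ha0, aux_coeff_mPoly a hq2 ha0, sub_eq_zero]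
    constructor
    · intro h; exact hainj _ (Nat.mod_lt _ (by omega)) _ (Nat.mod_lt _ (by omega)) h
    · intro h; rw [h]
  rw [← Nat.modEq_iff_dvd' hj]
  unfold Nat.ModEq
  rw [eq_comm, aux_mod_pow_eq_iff]
  exact ⟨fun H d hd => (h1 d).mp (H d hd), fun H d hd => (h1 d).mpr (H d hd)⟩

lemma aux_ne_zero (hq2 : 2 ≤ q) (ha0 : a 0 = 0)
    (hainj : ∀ i < q, ∀ i' < q, a i = a i' → i = i') {n j : ℕ} (hj : j < n) :
    mPoly a q n - mPoly a q j ≠ 0 := by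
  intro h
  have hd : q ^ n ∣ (n - j) :=
    (aux_X_pow_dvd a hq2 ha0 hainj hj.le n).mp (by rw [h]; exact dvd_zero _)
  have h2 : n - j < q ^ n := aux_pow_big hq2 (by omega)
  have := Nat.le_of_dvd (by omega) hd
  omega

lemma aux_rootMult_factor (hq2 : 2 ≤ q) (ha0 : a 0 = 0)
    (hainj : ∀ i < q, ∀ i' < q, a i = a i' → i = i') {n j : ℕ} (hj : j < n) :
    (mPoly a q n - mPoly a q j).rootMultiplicity 0 =
      ((Finset.Ico 1 n).filter (fun r => q ^ r ∣ (n - j))).card := by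
  have hf0 : mPoly a q n - mPoly a q j ≠ 0 := aux_ne_zero a hq2 ha0 hainj hj
  set v := (mPoly a q n - mPoly a q j).rootMultiplicity 0 with hv
  have key : ∀ r : ℕ, (r ≤ v ↔ q ^ r ∣ (n - j)) := by
    intro r
    rw [hv, ← aux_X_pow_dvd a hq2 ha0 hainj hj.le r, Polynomial.le_rootMultiplicity_iff hf0,
      Polynomial.C_0, sub_zero]
  have hvn : v < n := by
    have hd := (key v).mp le_rfl
    have h1 := Nat.le_of_dvd (by omega) hd
    have h2 : v < q ^ v := aux_pow_big hq2 le_rfl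
    omega
  have heq : (Finset.Ico 1 n).filter (fun r => q ^ r ∣ (n - j)) = Finset.Ico 1 (v + 1) := by
    ext r
    simp only [Finset.mem_filter, Finset.mem_Ico, Nat.lt_succ_iff]
    constructor
    · rintro ⟨⟨h1, _⟩, h3⟩; exact ⟨h1, (key r).mpr h3⟩
    · rintro ⟨h1, h2⟩
      exact ⟨⟨h1, lt_of_le_of_lt h2 hvn⟩, (key r).mp h2⟩
  rw [heq, Nat.card_Ico]
  omega

lemma aux_rootMult_prod (s : Finset ℕ) (f : ℕ → Polynomial Fq)
    (hf : ∀ j ∈ s, f j ≠ 0) (x : Fq) :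
    (∏ j ∈ s, f j).rootMultiplicity x = ∑ j ∈ s, (f j).rootMultiplicity x := by
  induction s using Finset.cons_induction with
  | empty =>
    simp only [Finset.prod_empty, Finset.sum_empty]
    exact Polynomial.rootMultiplicity_eq_zero (by simp [Polynomial.IsRoot])
  | cons b s hb ih =>
    rw [Finset.prod_cons, Finset.sum_cons,
      Polynomial.rootMultiplicity_mul
        (mul_ne_zero (hf b (Finset.mem_cons_self b s))
          (Finset.prod_ne_zero_iff.mpr fun j hj => hf j (Finset.mem_cons_of_mem hj))),
      ih fun j hj => hf j (Finset.mem_cons_of_mem hj)]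

lemma aux_count_dvd (n r : ℕ) :
    ((Finset.range n).filter (fun j => q ^ r ∣ (n - j))).card = n / q ^ r := by
  rw [← Nat.Ioc_filter_dvd_card_eq_div n (q ^ r)]
  apply Finset.card_nbij' (i := fun j => n - j) (j := fun x => n - x)
  · intro j hj
    simp only [Finset.mem_coe, Finset.mem_filter, Finset.mem_range, Finset.mem_Ioc] at hj ⊢
    omega
  · intro x hx
    simp only [Finset.mem_coe, Finset.mem_filter, Finset.mem_range, Finset.mem_Ioc] at hx ⊢
    constructor
    · omega
    · have : n - (n - x) = x := by omega
      rw [this]; exact hx.2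
  · intro j hj
    simp only [Finset.mem_coe, Finset.mem_filter, Finset.mem_range] at hj
    dsimp only
    omega
  · intro x hx
    simp only [Finset.mem_coe, Finset.mem_filter, Finset.mem_Ioc] at hx
    dsimp only
    omega

lemma aux_sum_Ico_div (hq2 : 2 ≤ q) (n : ℕ) {B : ℕ} (hB : n ≤ B) :
    (∑ r ∈ Finset.Ico 1 B, n / q ^ r) = ∑ r ∈ Finset.Ico 1 n, n / q ^ r := by
  refine (Finset.sum_subset (Finset.Ico_subset_Ico le_rfl hB) fun x hx hx' => ?_).symm
  simp only [Finset.mem_Ico] at hx hx'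
  exact Nat.div_eq_of_lt (aux_pow_big hq2 (by omega))

lemma aux_sum_range_div (hq2 : 2 ≤ q) (m : ℕ) {B : ℕ} (hB : m ≤ B) :
    (∑ i ∈ Finset.range B, m / q ^ i) = ∑ i ∈ Finset.range m, m / q ^ i := by
  refine (Finset.sum_subset (Finset.range_subset_range.mpr hB) fun x hx hx' => ?_).symm
  simp only [Finset.mem_range] at hx hx'
  exact Nat.div_eq_of_lt (aux_pow_big hq2 (by omega))

lemma aux_c_succ (hq2 : 2 ≤ q) (k : ℕ) :
    (q ^ (k + 1) - 1) / (q - 1) = q ^ k + (q ^ k - 1) / (q - 1) := by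
  have e1 : q ^ k * (q - 1) = q ^ (k + 1) - q ^ k := by
    rw [Nat.mul_sub, mul_one, ← pow_succ]
  have h1 : 1 ≤ q ^ k := Nat.one_le_pow _ _ (by omega)
  have h2 : q ^ k ≤ q ^ (k + 1) := Nat.pow_le_pow_right (by omega) k.le_succ
  have h3 : q ^ (k + 1) - 1 = (q ^ k - 1) + q ^ k * (q - 1) := by omega
  rw [h3, Nat.add_mul_div_right _ _ (by omega : 0 < q - 1), add_comm]

lemma aux_self_eq_sum (hq2 : 2 ≤ q) : ∀ n : ℕ,
    (∑ k ∈ Finset.range (Nat.digits q n).length, q ^ k * ((Nat.digits q n).getD k 0)) = n := by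
  intro n
  induction n using Nat.strong_induction_on with
  | _ n ih =>
    rcases Nat.eq_zero_or_pos n with rfl | hn
    · simp
    · have hm : n / q < n := Nat.div_lt_self hn (by omega)
      rw [Nat.digits_def' (by omega : 1 < q) hn]
      simp only [List.length_cons]
      rw [Finset.sum_range_succ']
      simp only [List.getD_cons_succ, List.getD_cons_zero, pow_zero, one_mul]
      have : ∀ k, q ^ (k + 1) * ((Nat.digits q (n / q)).getD k 0)
          = q * (q ^ k * ((Nat.digits q (n / q)).getD k 0)) := by
        intro k; rw [pow_succ']; ring
      rw [Finset.sum_congr rfl fun k _ => this k, ← Finset.mul_sum, ih _ hm]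
      exact Nat.div_add_mod n q

lemma aux_sum_div_eq (hq2 : 2 ≤ q) : ∀ n : ℕ,
    (∑ r ∈ Finset.Ico 1 n, n / q ^ r) =
      ∑ k ∈ Finset.range (Nat.digits q n).length,
        ((q ^ k - 1) / (q - 1)) * ((Nat.digits q n).getD k 0) := by
  intro n
  induction n using Nat.strong_induction_on with
  | _ n ih =>
    rcases Nat.eq_zero_or_pos n with rfl | hn
    · simp
    · set m := n / q with hmdef
      have hm : m < n := Nat.div_lt_self hn (by omega)
      have hrhs : (∑ k ∈ Finset.range (Nat.digits q n).length,
          ((q ^ k - 1) / (q - 1)) * ((Nat.digits q n).getD k 0)) = m +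
          ∑ k ∈ Finset.range (Nat.digits q m).length,
            ((q ^ k - 1) / (q - 1)) * ((Nat.digits q m).getD k 0) := by
        rw [Nat.digits_def' (by omega : 1 < q) hn]
        simp only [List.length_cons]
        rw [Finset.sum_range_succ']
        simp only [List.getD_cons_succ, List.getD_cons_zero, pow_zero]
        have hc0 : (1 - 1) / (q - 1) = 0 := by simp
        rw [hc0, zero_mul, add_zero]
        have : ∀ k, ((q ^ (k + 1) - 1) / (q - 1)) * ((Nat.digits q m).getD k 0)
            = q ^ k * ((Nat.digits q m).getD k 0)
              + ((q ^ k - 1) / (q - 1)) * ((Nat.digits q m).getD k 0) := by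
          intro k; rw [aux_c_succ hq2, add_mul]
        rw [Finset.sum_congr rfl fun k _ => this k, Finset.sum_add_distrib,
          aux_self_eq_sum hq2 m]
      rw [hrhs, ← ih m hm]
      -- LHS: ∑ r ∈ Ico 1 n, n / q^r = m + ∑ r ∈ Ico 1 m, m / q^r
      rw [Finset.sum_Ico_eq_sum_range]
      have hterm : ∀ i, n / q ^ (1 + i) = m / q ^ i := by
        intro i
        rw [Nat.add_comm 1 i, hmdef, Nat.div_div_eq_div_mul, ← pow_succ']
      rw [Finset.sum_congr rfl fun i _ => hterm i,
        aux_sum_range_div hq2 m (by omega : m ≤ n - 1)]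
      rcases Nat.eq_zero_or_pos m with hm0 | hmpos
      · simp [hm0]
      · rw [Finset.range_eq_Ico, Finset.sum_eq_sum_Ico_succ_bot hmpos]
        simp

end Aux

theorem val_Pn_mn
    (p γ : ℕ) (hp : p.Prime) (hγ : 0 < γ) (q : ℕ) (hq : q = p ^ γ)
    (Fq : Type*) [Field Fq] [Fintype Fq] (hcard : Fintype.card Fq = q)
    (a : ℕ → Fq) (ha : Function.Bijective fun i : Fin q => a i)
    (ha0 : a 0 = 0) (ha1 : a 1 = 1) (n : ℕ) :
    (∏ j ∈ Finset.range n, (mPoly a q n - mPoly a q j)).rootMultiplicity 0 =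
      ∑ k ∈ Finset.range (Nat.digits q n).length,
        ((q ^ k - 1) / (q - 1)) * ((Nat.digits q n).getD k 0) := by
  have hq2 : 2 ≤ q := by
    rw [hq]
    calc 2 ≤ p := hp.two_le
    _ = p ^ 1 := (pow_one p).symm
    _ ≤ p ^ γ := Nat.pow_le_pow_right hp.pos hγ
  have hainj : ∀ i < q, ∀ i' < q, a i = a i' → i = i' := by
    intro i hi i' hi' h
    have := ha.injective (a₁ := ⟨i, hi⟩) (a₂ := ⟨i', hi'⟩) h
    exact congrArg Fin.val this
  rw [aux_rootMult_prod _ _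
    (fun j hj => aux_ne_zero a hq2 ha0 hainj (Finset.mem_range.mp hj)) 0]
  calc (∑ j ∈ Finset.range n, (mPoly a q n - mPoly a q j).rootMultiplicity 0)
      = ∑ j ∈ Finset.range n,
          ((Finset.Ico 1 n).filter (fun r => q ^ r ∣ (n - j))).card := by
        refine Finset.sum_congr rfl fun j hj => ?_
        exact aux_rootMult_factor a hq2 ha0 hainj (Finset.mem_range.mp hj)
    _ = ∑ r ∈ Finset.Ico 1 n,
          ((Finset.range n).filter (fun j => q ^ r ∣ (n - j))).card := by
        simp_rw [Finset.card_filter]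
        exact Finset.sum_comm
    _ = ∑ r ∈ Finset.Ico 1 n, n / q ^ r := by
        exact Finset.sum_congr rfl fun r _ => aux_count_dvd n r
    _ = _ := aux_sum_div_eq hq2 n
end
end

section
/- (Key counting lemma) Let n have q-adic digits α_0, …, α_s and define m_j ∈ F_q[x] as the polynomial whose coefficient of x^k is the α-th enumerated element a_α of F_q where α is the k-th q-adic digit of j (with a_0 = 0). Then for each r ≥ 1, the number of indices j ∈ {0, 1, …, n−1} such that m_n − m_j is divisible by x^r equals α_r + α_{r+1} q + ⋯ + α_s q^{s−r}. -/
/- STATEMENT 9 (key counting lemma): With m_j ∈ F_q[x] built from the q-adic digits of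
   j via an enumeration a of F_q with a_0 = 0, for each r ≥ 1 the number of indices
   j ∈ {0, …, n-1} with x^r ∣ m_n - m_j equals α_r + α_{r+1} q + ⋯ + α_s q^{s-r},
   where α_k are the q-adic digits of n. -/


-- digit formula
lemma digit_eq {q : ℕ} (hq : 2 ≤ q) (m k : ℕ) :
    (Nat.digits q m).getD k 0 = m / q ^ k % q := by
  rw [Nat.self_div_pow_eq_ofDigits_drop k m hq]
  rcases h : (Nat.digits q m).drop k with _ | ⟨d, l⟩
  · have hlen : (Nat.digits q m).length ≤ k := List.drop_eq_nil_iff.mp h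
    rw [Nat.ofDigits_nil, List.getD_eq_default _ _ hlen]; simp
  · have hd : d ∈ Nat.digits q m := by
      have : d ∈ (Nat.digits q m).drop k := by rw [h]; exact List.mem_cons_self
      exact List.mem_of_mem_drop this
    have hdq : d < q := Nat.digits_lt_base hq hd
    have : (Nat.digits q m).getD k 0 = d := by
      have := List.getElem?_drop (xs := Nat.digits q m) (i := k) (j := 0)
      simp [h] at this
      simp [List.getD, ← this]
    rw [this, Nat.ofDigits_cons]
    simp [Nat.add_mul_mod_self_left, Nat.mod_eq_of_lt hdq]

lemma mod_pow_eq_iff {q : ℕ} (hq : 0 < q) (j n r : ℕ) :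
    j % q ^ r = n % q ^ r ↔ ∀ k < r, j / q ^ k % q = n / q ^ k % q := by
  induction r with
  | zero => simp [Nat.mod_one]
  | succ r ih =>
    have hpos : 0 < q ^ r := Nat.pow_pos (n := r) hq
    rw [pow_succ, Nat.mod_mul, Nat.mod_mul]
    constructor
    · intro h k hk
      have hA : j % q ^ r < q ^ r := Nat.mod_lt _ hpos
      have hB : n % q ^ r < q ^ r := Nat.mod_lt _ hpos
      have h1 : j % q ^ r = n % q ^ r := by
        have := congrArg (· % q ^ r) h
        simpa [Nat.add_mul_mod_self_left, Nat.mod_eq_of_lt hA, Nat.mod_eq_of_lt hB] using this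
      have h2 : j / q ^ r % q = n / q ^ r % q := by
        rw [h1] at h
        exact Nat.eq_of_mul_eq_mul_left hpos (Nat.add_left_cancel h)
      rcases Nat.lt_succ_iff_lt_or_eq.mp hk with hk' | hk'
      · exact (ih.mp h1) k hk'
      · rw [hk']; exact h2
    · intro h
      have h1 : j % q ^ r = n % q ^ r := ih.mpr fun k hk => h k (hk.trans (Nat.lt_succ_self r))
      rw [h1, h r (Nat.lt_succ_self r)]

lemma card_mod_eq (n m : ℕ) (hm : 0 < m) :
    ((Finset.range n).filter (fun j => j % m = n % m)).card = n / m := by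
  rw [← Finset.card_range (n / m)]
  symm
  apply Finset.card_bij' (fun t _ => n % m + m * t) (fun x _ => x / m)
  · intro t ht
    rw [Finset.mem_range] at ht
    rw [Finset.mem_filter, Finset.mem_range]
    have hdm := Nat.div_add_mod n m
    have h1 : m * (t + 1) ≤ m * (n / m) := Nat.mul_le_mul_left m ht
    have h2 : m * (t + 1) = m * t + m := by ring
    constructor
    · omega
    · rw [Nat.add_mul_mod_self_left, Nat.mod_mod_of_dvd n (dvd_refl m)]
  · intro x hx
    rw [Finset.mem_filter, Finset.mem_range] at hx
    rw [Finset.mem_range]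
    by_contra hcon
    push_neg at hcon
    have h1 : m * (n / m) ≤ m * (x / m) := Nat.mul_le_mul_left m hcon
    have h2 := Nat.div_add_mod n m
    have h3 := Nat.div_add_mod x m
    omega
  · intro t ht
    rw [Nat.add_mul_div_left _ _ hm, Nat.div_eq_of_lt (Nat.mod_lt _ hm), Nat.zero_add]
  · intro x hx
    rw [Finset.mem_filter] at hx
    have h3 := Nat.div_add_mod x m
    omega

lemma base_repr_sum {q : ℕ} (hq : 0 < q) :
    ∀ L m, m < q ^ L → ∑ k ∈ Finset.range L, m / q ^ k % q * q ^ k = m := by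
  intro L
  induction L with
  | zero => intro m hm; rw [pow_zero] at hm; simp [Nat.lt_one_iff.mp hm]
  | succ L ih =>
    intro m hm
    rw [Finset.sum_range_succ']
    have hdiv : m / q < q ^ L := by
      rw [Nat.div_lt_iff_lt_mul hq, ← pow_succ]
      exact hm
    have := ih (m / q) hdiv
    calc ∑ k ∈ Finset.range L, m / q ^ (k + 1) % q * q ^ (k + 1) + m / q ^ 0 % q * q ^ 0
        = q * ∑ k ∈ Finset.range L, (m / q) / q ^ k % q * q ^ k + m % q := by
          rw [Finset.mul_sum]
          congr 1
          · apply Finset.sum_congr rfl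
            intro k _
            rw [pow_succ', ← Nat.div_div_eq_div_mul]
            ring
          · simp
      _ = m := by rw [this, Nat.div_add_mod]

noncomputable section

open scoped Classical

lemma coeff_mPoly {Fq : Type*} [CommRing Fq] (a : ℕ → Fq) (ha0 : a 0 = 0) (q j k : ℕ) :
    (mPoly a q j).coeff k = a ((Nat.digits q j).getD k 0) := by
  unfold mPoly
  rw [Polynomial.finset_sum_coeff]
  simp only [Polynomial.coeff_C_mul, Polynomial.coeff_X_pow]
  by_cases hk : k < (Nat.digits q j).length
  · rw [Finset.sum_eq_single k]
    · simp
    · intro b _ hb; simp [Ne.symm hb]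
    · intro hkk; exact absurd (Finset.mem_range.mpr hk) hkk
  · rw [List.getD_eq_default _ _ (Nat.le_of_not_lt hk), ha0]
    apply Finset.sum_eq_zero
    intro b hb
    rw [Finset.mem_range] at hb
    have : k ≠ b := by omega
    simp [this]

theorem count_divisible_differences
    (p γ : ℕ) (hp : p.Prime) (hγ : 0 < γ) (q : ℕ) (hq : q = p ^ γ)
    (Fq : Type*) [Field Fq] [Fintype Fq] (hcard : Fintype.card Fq = q)
    (a : ℕ → Fq) (ha : Function.Bijective fun i : Fin q => a i)
    (ha0 : a 0 = 0) (n r : ℕ) (hr : 1 ≤ r) :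
    ((Finset.range n).filter fun j =>
        (Polynomial.X : Polynomial Fq) ^ r ∣ mPoly a q n - mPoly a q j).card =
      ∑ k ∈ Finset.range (Nat.digits q n).length,
        ((Nat.digits q n).getD (r + k) 0) * q ^ k := by
  have hq2 : 2 ≤ q := by
    rw [hq]
    calc 2 ≤ p := hp.two_le
      _ = p ^ 1 := (pow_one p).symm
      _ ≤ p ^ γ := Nat.pow_le_pow_right hp.pos hγ
  have hq0 : 0 < q := by omega
  have ainj : ∀ x y : ℕ, x < q → y < q → a x = a y → x = y := by
    intro x y hx hy hxy
    have := ha.injective (a₁ := ⟨x, hx⟩) (a₂ := ⟨y, hy⟩) hxy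
    exact congrArg Fin.val this
  -- rewrite the filter condition
  have hfilt : ∀ j : ℕ,
      ((Polynomial.X : Polynomial Fq) ^ r ∣ mPoly a q n - mPoly a q j) ↔
        j % q ^ r = n % q ^ r := by
    intro j
    rw [Polynomial.X_pow_dvd_iff, mod_pow_eq_iff hq0]
    constructor
    · intro h k hk
      have := h k hk
      rw [Polynomial.coeff_sub, coeff_mPoly a ha0, coeff_mPoly a ha0, sub_eq_zero] at this
      rw [digit_eq hq2, digit_eq hq2] at this
      exact (ainj _ _ (Nat.mod_lt _ hq0) (Nat.mod_lt _ hq0) this).symm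
    · intro h k hk
      rw [Polynomial.coeff_sub, coeff_mPoly a ha0, coeff_mPoly a ha0, sub_eq_zero,
        digit_eq hq2, digit_eq hq2, h k hk]
  have hcardeq : ((Finset.range n).filter fun j =>
      (Polynomial.X : Polynomial Fq) ^ r ∣ mPoly a q n - mPoly a q j).card = n / q ^ r := by
    rw [show ((Finset.range n).filter fun j =>
        (Polynomial.X : Polynomial Fq) ^ r ∣ mPoly a q n - mPoly a q j) =
        ((Finset.range n).filter fun j => j % q ^ r = n % q ^ r) from
      Finset.filter_congr fun j _ => by rw [hfilt j]]
    exact card_mod_eq n (q ^ r) (Nat.pow_pos (n := r) hq0)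
  rw [hcardeq]
  -- RHS
  have hL : n / q ^ r < q ^ (Nat.digits q n).length :=
    lt_of_le_of_lt (Nat.div_le_self n _) (Nat.lt_base_pow_length_digits hq2)
  rw [← base_repr_sum hq0 _ _ hL]
  apply Finset.sum_congr rfl
  intro k _
  rw [digit_eq hq2, Nat.div_div_eq_div_mul, ← pow_add]
end
end
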